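/- arXiv:2307.00564 — 4 statements merged into one kernel-verified Lean document; each statement's English description precedes it below -/
import Mathlib

section
/- For N ≥ 3, 0 < λ < N, and θ > N, there exists a constant C > 0 such that for all x ∈ ℝ^N, ∫_{ℝ^N} |x−y|^{−λ} (1+|y|²)^{−θ/2} dy ≤ C (1+|x|²)^{−λ/2}. -/
set_option maxHeartbeats 1000000

open MeasureTheory Real Metric Set Filter

lemma aux_unitBall (N : ℕ) (hN : 3 ≤ N) {lam : ℝ} (h0 : 0 < lam) (hlt : lam < N) :
    IntegrableOn (fun z : EuclideanSpace ℝ (Fin N) => ‖z‖ ^ (-lam))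
      (Metric.ball 0 1) := by
  haveI : Nonempty (Fin N) := ⟨⟨0, by omega⟩⟩
  have hmes : Measurable (fun z : EuclideanSpace ℝ (Fin N) => ‖z‖ ^ (-lam)) := by
    fun_prop
  have hnn : ∀ z : EuclideanSpace ℝ (Fin N), 0 ≤ ‖z‖ ^ (-lam) := fun z =>
    rpow_nonneg (norm_nonneg _) _
  set B := volume (Metric.ball (0 : EuclideanSpace ℝ (Fin N)) 1) with hB
  constructor
  · exact hmes.aestronglyMeasurable.restrict
  · rw [HasFiniteIntegral, lintegral_enorm_of_nonneg hnn]
    rw [lintegral_eq_lintegral_meas_le _ (Eventually.of_forall hnn) hmes.aemeasurable]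
    have key : ∀ t ∈ Ioi (1 : ℝ),
        (volume.restrict (Metric.ball (0 : EuclideanSpace ℝ (Fin N)) 1))
          {a | t ≤ ‖a‖ ^ (-lam)}
          ≤ ENNReal.ofReal (t ^ (-((N : ℝ) / lam))) * B := by
      intro t ht
      have ht1 : (1 : ℝ) < t := ht
      have ht0 : (0 : ℝ) < t := by linarith
      have hsub : {a : EuclideanSpace ℝ (Fin N) | t ≤ ‖a‖ ^ (-lam)}
          ⊆ Metric.closedBall 0 (t ^ (-lam⁻¹)) := by
        intro a ha
        simp only [mem_setOf_eq] at ha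
        have hapos : 0 < ‖a‖ := by
          rcases eq_or_lt_of_le (norm_nonneg a) with h | h
          · exfalso
            rw [← h, Real.zero_rpow (neg_ne_zero.mpr h0.ne')] at ha
            linarith
          · exact h
        have h2 := Real.rpow_le_rpow_of_nonpos ht0 ha
          (by simp [h0.le] : -lam⁻¹ ≤ 0)
        rw [← Real.rpow_mul (norm_nonneg a)] at h2
        have hone : -lam * -lam⁻¹ = 1 := by field_simp
        rw [hone, Real.rpow_one] at h2
        simpa [Metric.mem_closedBall, dist_zero_right] using h2
      have step1 : (volume.restrict (Metric.ball (0 : EuclideanSpace ℝ (Fin N)) 1))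
          {a | t ≤ ‖a‖ ^ (-lam)}
          ≤ volume (Metric.closedBall (0 : EuclideanSpace ℝ (Fin N)) (t ^ (-lam⁻¹))) :=
        le_trans (Measure.restrict_le_self _) (measure_mono hsub)
      refine step1.trans (le_of_eq ?_)
      rw [Measure.addHaar_closedBall _ _ (by positivity)]
      congr 1
      rw [finrank_euclideanSpace_fin, ← Real.rpow_natCast (t ^ (-lam⁻¹)) N,
        ← Real.rpow_mul ht0.le]
      congr 1
      rw [div_eq_mul_inv]
      ring_nf
    refine lt_of_le_of_lt (lintegral_mono_set (Ioi_subset_Ioc_union_Ioi (b := 1))) ?_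
    refine lt_of_le_of_lt (lintegral_union_le _ _ _) ?_
    rw [ENNReal.add_lt_top]
    constructor
    · have h1 : (∫⁻ t in Ioc (0:ℝ) 1,
          (volume.restrict (Metric.ball (0 : EuclideanSpace ℝ (Fin N)) 1))
            {a | t ≤ ‖a‖ ^ (-lam)})
          ≤ ∫⁻ _t in Ioc (0:ℝ) 1, B :=
        lintegral_mono fun t =>
          (measure_mono (subset_univ _)).trans_eq (Measure.restrict_apply_univ _)
      refine lt_of_le_of_lt h1 ?_
      rw [setLIntegral_const]
      exact ENNReal.mul_lt_top measure_ball_lt_top measure_Ioc_lt_top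
    · have hint : IntegrableOn (fun t : ℝ => t ^ (-((N : ℝ) / lam))) (Ioi 1) := by
        apply integrableOn_Ioi_rpow_of_lt _ one_pos
        rw [neg_lt_neg_iff]
        exact (one_lt_div h0).mpr hlt
      have hfin := hint.2
      rw [HasFiniteIntegral] at hfin
      refine lt_of_le_of_lt (setLIntegral_mono' measurableSet_Ioi key) ?_
      rw [lintegral_mul_const' _ _ measure_ball_lt_top.ne]
      refine ENNReal.mul_lt_top (lt_of_le_of_lt (lintegral_mono fun t => ?_) hfin)
        measure_ball_lt_top
      exact Real.ofReal_le_enorm _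

lemma aux_ballR (N : ℕ) (hN : 3 ≤ N) {lam : ℝ} (h0 : 0 < lam) (hlt : lam < N)
    {R : ℝ} (hR : 0 < R) :
    IntegrableOn (fun z : EuclideanSpace ℝ (Fin N) => ‖z‖ ^ (-lam))
      (Metric.ball 0 R) ∧
    (∫ z in Metric.ball (0 : EuclideanSpace ℝ (Fin N)) R, ‖z‖ ^ (-lam))
      = R ^ ((N : ℝ) - lam) *
        ∫ z in Metric.ball (0 : EuclideanSpace ℝ (Fin N)) 1, ‖z‖ ^ (-lam) := by
  haveI : Nonempty (Fin N) := ⟨⟨0, by omega⟩⟩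
  have h1 := aux_unitBall N hN h0 hlt
  have hint : IntegrableOn (fun z : EuclideanSpace ℝ (Fin N) => ‖z‖ ^ (-lam))
      (Metric.ball 0 R) := by
    have h2 : IntegrableOn (fun z : EuclideanSpace ℝ (Fin N) => ‖z‖ ^ (-lam))
        (Metric.ball 0 R \ Metric.ball 0 1) := by
      apply Measure.integrableOn_of_bounded (M := 1)
      · exact ((measure_mono diff_subset).trans_lt measure_ball_lt_top).ne
      · exact Measurable.aestronglyMeasurable (by fun_prop)
      · refine (ae_restrict_iff' (measurableSet_ball.diff measurableSet_ball)).mpr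
          (ae_of_all _ fun z hz => ?_)
        have hz1 : (1 : ℝ) ≤ ‖z‖ := by
          by_contra h
          exact hz.2 (mem_ball_zero_iff.mpr (lt_of_not_ge h))
        rw [Real.norm_of_nonneg (rpow_nonneg (norm_nonneg _) _)]
        exact Real.rpow_le_one_of_one_le_of_nonpos hz1 (by linarith)
    refine (h1.union h2).mono_set fun z hz => ?_
    by_cases h : z ∈ Metric.ball (0 : EuclideanSpace ℝ (Fin N)) 1
    · exact Or.inl h
    · exact Or.inr ⟨hz, h⟩
  refine ⟨hint, ?_⟩
  have hmap := Measure.setIntegral_comp_smul_of_pos volume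
    (fun z : EuclideanSpace ℝ (Fin N) => ‖z‖ ^ (-lam)) (Metric.ball 0 1) hR
  rw [smul_unitBall_of_pos hR, finrank_euclideanSpace_fin] at hmap
  have hL : (∫ x in Metric.ball (0 : EuclideanSpace ℝ (Fin N)) 1, ‖R • x‖ ^ (-lam))
      = R ^ (-lam) * ∫ x in Metric.ball (0 : EuclideanSpace ℝ (Fin N)) 1, ‖x‖ ^ (-lam) := by
    rw [← integral_const_mul]
    refine setIntegral_congr_fun measurableSet_ball fun x _ => ?_
    rw [norm_smul, Real.norm_of_nonneg hR.le,
      Real.mul_rpow hR.le (norm_nonneg _)]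
  rw [hL, smul_eq_mul] at hmap
  have hRN : (R : ℝ) ^ N ≠ 0 := by positivity
  have hJ : (∫ z in Metric.ball (0 : EuclideanSpace ℝ (Fin N)) R, ‖z‖ ^ (-lam))
      = R ^ N * (R ^ (-lam) *
        ∫ z in Metric.ball (0 : EuclideanSpace ℝ (Fin N)) 1, ‖z‖ ^ (-lam)) := by
    rw [hmap]
    field_simp
  rw [hJ, Real.rpow_sub hR, Real.rpow_natCast, Real.rpow_neg hR.le]
  ring

theorem stmt0 (N : ℕ) (hN : 3 ≤ N) (lam θ : ℝ) (h0 : 0 < lam) (hlt : lam < N)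
    (hθ : (N : ℝ) < θ) :
    ∃ C > 0, ∀ x : EuclideanSpace ℝ (Fin N),
      (∫ y : EuclideanSpace ℝ (Fin N),
          ‖x - y‖ ^ (-lam) * (1 + ‖y‖ ^ 2) ^ (-(θ / 2)))
        ≤ C * (1 + ‖x‖ ^ 2) ^ (-(lam / 2)) := by
  haveI : Nonempty (Fin N) := ⟨⟨0, by omega⟩⟩
  have hN3 : (3 : ℝ) ≤ (N : ℝ) := by exact_mod_cast hN
  have hθ0 : 0 < θ := by linarith
  have hθfin : (Module.finrank ℝ (EuclideanSpace ℝ (Fin N)) : ℝ) < θ := by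
    rw [finrank_euclideanSpace_fin]; exact hθ
  have hK : Integrable
      (fun y : EuclideanSpace ℝ (Fin N) => (1 + ‖y‖ ^ 2) ^ (-(θ / 2))) := by
    have := integrable_rpow_neg_one_add_norm_sq
      (E := EuclideanSpace ℝ (Fin N)) (μ := volume) hθfin
    simpa [neg_div] using this
  set K : ℝ := ∫ y : EuclideanSpace ℝ (Fin N), (1 + ‖y‖ ^ 2) ^ (-(θ / 2)) with hKdef
  set I₁ : ℝ := ∫ z in Metric.ball (0 : EuclideanSpace ℝ (Fin N)) 1, ‖z‖ ^ (-lam)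
    with hI₁def
  have hK0 : 0 ≤ K := integral_nonneg fun y => rpow_nonneg (by positivity) _
  have hI0 : 0 ≤ I₁ := setIntegral_nonneg measurableSet_ball
    fun z _ => rpow_nonneg (norm_nonneg _) _
  have h2l : (0:ℝ) ≤ 2 ^ lam := rpow_nonneg (by norm_num) _
  have h4θ : (0:ℝ) ≤ 4 ^ θ := rpow_nonneg (by norm_num) _
  have h2lN : (0:ℝ) ≤ 2 ^ (lam - (N:ℝ)) := rpow_nonneg (by norm_num) _
  refine ⟨2 ^ lam * K + 4 ^ θ * 2 ^ (lam - (N:ℝ)) * I₁ + 1, by nlinarith [mul_nonneg h2l hK0, mul_nonneg (mul_nonneg h4θ h2lN) hI0], fun x => ?_⟩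
  set t : ℝ := (1 + ‖x‖ ^ 2) ^ ((1:ℝ)/2) with htdef
  have honele : (1:ℝ) ≤ 1 + ‖x‖ ^ 2 := by nlinarith [sq_nonneg ‖x‖]
  have ht1 : 1 ≤ t := Real.one_le_rpow honele (by norm_num)
  have ht0 : 0 < t := by linarith
  have htsq : t ^ 2 = 1 + ‖x‖ ^ 2 := by
    rw [htdef, ← Real.rpow_natCast ((1 + ‖x‖ ^ 2) ^ ((1:ℝ)/2)) 2,
      ← Real.rpow_mul (by positivity)]
    norm_num
  have hrhs : (1 + ‖x‖ ^ 2) ^ (-(lam/2)) = t ^ (-lam) := by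
    rw [htdef, ← Real.rpow_mul (by positivity)]
    congr 1
    ring
  have htx : t ≤ 1 + ‖x‖ := by nlinarith [norm_nonneg x]
  -- the two dominating functions
  set g : EuclideanSpace ℝ (Fin N) → ℝ :=
    fun y => 2 ^ lam * t ^ (-lam) * (1 + ‖y‖ ^ 2) ^ (-(θ / 2)) with hgdef
  set h : EuclideanSpace ℝ (Fin N) → ℝ :=
    Set.indicator (Metric.ball x (t/2))
      (fun y => 4 ^ θ * t ^ (-θ) * ‖x - y‖ ^ (-lam)) with hhdef
  have hfnn : ∀ y : EuclideanSpace ℝ (Fin N),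
      0 ≤ ‖x - y‖ ^ (-lam) * (1 + ‖y‖ ^ 2) ^ (-(θ / 2)) := fun y => by positivity
  have hgnn : ∀ y, 0 ≤ g y := fun y => by
    rw [hgdef]
    positivity
  have hhnn : ∀ y, 0 ≤ h y := fun y => by
    rw [hhdef]
    apply Set.indicator_nonneg
    intro y _
    positivity
  have hbound : ∀ y : EuclideanSpace ℝ (Fin N),
      ‖x - y‖ ^ (-lam) * (1 + ‖y‖ ^ 2) ^ (-(θ / 2)) ≤ g y + h y := by
    intro y
    by_cases hy : y ∈ Metric.ball x (t/2)
    · -- inside the ball : use h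
      have hxy : ‖x - y‖ < t/2 := by
        have := Metric.mem_ball.mp hy
        rw [dist_eq_norm, norm_sub_rev] at this
        exact this
      set s : ℝ := (1 + ‖y‖ ^ 2) ^ ((1:ℝ)/2) with hsdef
      have honele' : (1:ℝ) ≤ 1 + ‖y‖ ^ 2 := by nlinarith [sq_nonneg ‖y‖]
      have hs1 : 1 ≤ s := Real.one_le_rpow honele' (by norm_num)
      have hssq : s ^ 2 = 1 + ‖y‖ ^ 2 := by
        rw [hsdef, ← Real.rpow_natCast ((1 + ‖y‖ ^ 2) ^ ((1:ℝ)/2)) 2,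
          ← Real.rpow_mul (by positivity)]
        norm_num
      have hsy : ‖y‖ ≤ s := by nlinarith [norm_nonneg y]
      have htriangle : ‖x‖ - ‖y‖ ≤ ‖x - y‖ := norm_sub_norm_le x y
      have hst4 : t/4 ≤ s := by
        rcases le_or_gt ‖x‖ 3 with hx3 | hx3
        · have : t ≤ 4 := by linarith
          linarith
        · linarith
      have hkey : (1 + ‖y‖ ^ 2) ^ (-(θ / 2)) ≤ 4 ^ θ * t ^ (-θ) := by
        have hse : (1 + ‖y‖ ^ 2) ^ (-(θ / 2)) = s ^ (-θ) := by
          rw [hsdef, ← Real.rpow_mul (by positivity)]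
          congr 1
          ring
        have h1 : s ^ (-θ) ≤ (t/4) ^ (-θ) :=
          Real.rpow_le_rpow_of_nonpos (by linarith) hst4 (by linarith)
        have h2 : (t/4) ^ (-θ) = 4 ^ θ * t ^ (-θ) := by
          rw [Real.div_rpow ht0.le (by norm_num : (0:ℝ) ≤ 4), div_eq_mul_inv,
            ← Real.rpow_neg (by norm_num : (0:ℝ) ≤ 4), neg_neg]
          ring
        rw [hse]
        linarith [h1, h2.le]
      have : ‖x - y‖ ^ (-lam) * (1 + ‖y‖ ^ 2) ^ (-(θ / 2)) ≤ h y := by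
        rw [hhdef, Set.indicator_of_mem hy]
        calc ‖x - y‖ ^ (-lam) * (1 + ‖y‖ ^ 2) ^ (-(θ / 2))
            ≤ ‖x - y‖ ^ (-lam) * (4 ^ θ * t ^ (-θ)) :=
              mul_le_mul_of_nonneg_left hkey (rpow_nonneg (norm_nonneg _) _)
          _ = 4 ^ θ * t ^ (-θ) * ‖x - y‖ ^ (-lam) := by ring
      linarith [hgnn y]
    · -- outside the ball : use g
      have hxy : t/2 ≤ ‖x - y‖ := by
        have h' := Metric.mem_ball.not.mp hy
        rw [dist_eq_norm, norm_sub_rev] at h'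
        exact le_of_not_gt h'
      have hkey : ‖x - y‖ ^ (-lam) ≤ 2 ^ lam * t ^ (-lam) := by
        have h1 : ‖x - y‖ ^ (-lam) ≤ (t/2) ^ (-lam) :=
          Real.rpow_le_rpow_of_nonpos (by linarith) hxy (by linarith)
        have h2 : (t/2) ^ (-lam) = 2 ^ lam * t ^ (-lam) := by
          rw [Real.div_rpow ht0.le (by norm_num : (0:ℝ) ≤ 2), div_eq_mul_inv,
            ← Real.rpow_neg (by norm_num : (0:ℝ) ≤ 2), neg_neg]
          ring
        linarith
      have : ‖x - y‖ ^ (-lam) * (1 + ‖y‖ ^ 2) ^ (-(θ / 2)) ≤ g y := by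
        rw [hgdef]
        exact mul_le_mul_of_nonneg_right hkey (rpow_nonneg (by positivity) _)
      linarith [hhnn y]
  -- integrability of g
  have hg : Integrable g := by
    rw [hgdef]
    exact hK.const_mul _
  -- integrability and integral of h
  have hball := aux_ballR N hN h0 hlt (R := t/2) (by linarith)
  set φ : EuclideanSpace ℝ (Fin N) → ℝ :=
    Set.indicator (Metric.ball 0 (t/2))
      (fun z => 4 ^ θ * t ^ (-θ) * ‖z‖ ^ (-lam)) with hφdef
  have hφ : Integrable φ := by
    rw [hφdef]
    exact IntegrableOn.integrable_indicator (hball.1.const_mul _) measurableSet_ball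
  have hcomp : ∀ y, φ (x - y) = h y := by
    intro y
    have hmem : (x - y ∈ Metric.ball (0 : EuclideanSpace ℝ (Fin N)) (t/2))
        ↔ y ∈ Metric.ball x (t/2) := by
      rw [mem_ball_zero_iff, Metric.mem_ball, dist_eq_norm, norm_sub_rev]
    rw [hφdef, hhdef]
    by_cases hy : y ∈ Metric.ball x (t/2)
    · rw [Set.indicator_of_mem (hmem.mpr hy), Set.indicator_of_mem hy]
    · rw [Set.indicator_of_notMem (fun hc => hy (hmem.mp hc)),
        Set.indicator_of_notMem hy]
  have hh : Integrable h := by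
    have := (integrable_comp_sub_left φ x).mpr hφ
    refine this.congr (ae_of_all _ fun y => ?_)
    exact hcomp y
  have hhint : (∫ y, h y) = 4 ^ θ * t ^ (-θ) * ((t/2) ^ ((N:ℝ) - lam) * I₁) := by
    have e1 : (∫ y, h y) = ∫ y, φ (x - y) :=
      integral_congr_ae (ae_of_all _ fun y => (hcomp y).symm)
    rw [e1, integral_sub_left_eq_self φ volume x, hφdef,
      integral_indicator measurableSet_ball, integral_const_mul, hball.2]
  -- integrability of f
  have hfm : AEStronglyMeasurable
      (fun y : EuclideanSpace ℝ (Fin N) =>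
        ‖x - y‖ ^ (-lam) * (1 + ‖y‖ ^ 2) ^ (-(θ / 2))) volume := by
    apply Measurable.aestronglyMeasurable
    fun_prop
  have hf : Integrable (fun y : EuclideanSpace ℝ (Fin N) =>
      ‖x - y‖ ^ (-lam) * (1 + ‖y‖ ^ 2) ^ (-(θ / 2))) := by
    refine (hg.add hh).mono' hfm (ae_of_all _ fun y => ?_)
    rw [Real.norm_of_nonneg (hfnn y)]
    exact hbound y
  -- put everything together
  have hmono : (∫ y : EuclideanSpace ℝ (Fin N),
      ‖x - y‖ ^ (-lam) * (1 + ‖y‖ ^ 2) ^ (-(θ / 2))) ≤ (∫ y, g y) + ∫ y, h y := by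
    rw [← integral_add hg hh]
    exact integral_mono hf (hg.add hh) hbound
  have hgint : (∫ y, g y) = 2 ^ lam * t ^ (-lam) * K := by
    rw [hgdef, integral_const_mul, hKdef]
  -- estimate the h-term
  have hc : (t/2) ^ ((N:ℝ) - lam) = t ^ ((N:ℝ) - lam) * 2 ^ (lam - (N:ℝ)) := by
    rw [Real.div_rpow ht0.le (by norm_num : (0:ℝ) ≤ 2), div_eq_mul_inv,
      ← Real.rpow_neg (by norm_num : (0:ℝ) ≤ 2), neg_sub]
  have hbc : t ^ (-θ) * (t/2) ^ ((N:ℝ) - lam)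
      = 2 ^ (lam - (N:ℝ)) * t ^ ((N:ℝ) - θ - lam) := by
    rw [hc, ← mul_assoc, ← Real.rpow_add ht0]
    have he : -θ + ((N:ℝ) - lam) = (N:ℝ) - θ - lam := by ring
    rw [he]
    ring
  have ht3 : t ^ ((N:ℝ) - θ - lam) ≤ t ^ (-lam) :=
    Real.rpow_le_rpow_of_exponent_le ht1 (by linarith)
  have htnn : (0:ℝ) ≤ t ^ (-lam) := rpow_nonneg ht0.le _
  have hterm2 : 4 ^ θ * t ^ (-θ) * ((t/2) ^ ((N:ℝ) - lam) * I₁)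
      ≤ 4 ^ θ * 2 ^ (lam - (N:ℝ)) * I₁ * t ^ (-lam) := by
    have h1 : t ^ (-θ) * (t/2) ^ ((N:ℝ) - lam) ≤ 2 ^ (lam - (N:ℝ)) * t ^ (-lam) := by
      rw [hbc]
      exact mul_le_mul_of_nonneg_left ht3 h2lN
    calc 4 ^ θ * t ^ (-θ) * ((t/2) ^ ((N:ℝ) - lam) * I₁)
        = (4 ^ θ * I₁) * (t ^ (-θ) * (t/2) ^ ((N:ℝ) - lam)) := by ring
      _ ≤ (4 ^ θ * I₁) * (2 ^ (lam - (N:ℝ)) * t ^ (-lam)) :=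
          mul_le_mul_of_nonneg_left h1 (mul_nonneg h4θ hI0)
      _ = 4 ^ θ * 2 ^ (lam - (N:ℝ)) * I₁ * t ^ (-lam) := by ring
  rw [hrhs]
  calc (∫ y : EuclideanSpace ℝ (Fin N),
        ‖x - y‖ ^ (-lam) * (1 + ‖y‖ ^ 2) ^ (-(θ / 2)))
      ≤ (∫ y, g y) + ∫ y, h y := hmono
    _ ≤ 2 ^ lam * t ^ (-lam) * K + 4 ^ θ * 2 ^ (lam - (N:ℝ)) * I₁ * t ^ (-lam) := by
        rw [hgint, hhint]
        linarith
    _ ≤ (2 ^ lam * K + 4 ^ θ * 2 ^ (lam - (N:ℝ)) * I₁ + 1) * t ^ (-lam) := by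
        nlinarith [mul_nonneg h2l hK0]
end

section
/- Let N ≥ 3 and let g : ℝ^N → ℝ be continuous with sup_x (1+|x|²)^{(N+2)/2} |g(x)| = ‖g‖_Y < ∞. Define φ(x) = (N(N−2)ω_N)^{−1} ∫_{ℝ^N} g(y) |x−y|^{−(N−2)} dy with ω_N = 2π^{N/2}/(N Γ(N/2)). Then there is a constant C depending only on N with sup_x (1+|x|²)^{(N−2)/2} |φ(x)| ≤ C ‖g‖_Y. -/
open MeasureTheory Real Metric Set Module

variable {N : ℕ}

local notation "E" => EuclideanSpace ℝ (Fin N)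

lemma kernelIntOn (hN : 3 ≤ N) {ρ : ℝ} (hρ : 0 < ρ) :
    IntegrableOn (fun z : E => ‖z‖ ^ (-((N:ℝ) - 2))) (ball (0 : E) ρ) := by
  have hN3 : (3:ℝ) ≤ (N:ℝ) := by exact_mod_cast hN
  set s : ℝ := (N:ℝ) - 2 with hs_def
  have hs : 0 < s := by simp only [hs_def]; linarith
  have hsN : s < (N:ℝ) := by simp only [hs_def]; linarith
  have hmeas : Measurable fun z : E => ‖z‖ ^ (-s) := by fun_prop
  constructor
  · exact hmeas.aestronglyMeasurable
  · have hnn : ∀ z : E, 0 ≤ ‖z‖ ^ (-s) := fun z => by positivity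
    have h1 : (∫⁻ a : E, ‖(‖a‖ : ℝ) ^ (-s)‖ₑ ∂(volume.restrict (ball (0:E) ρ))) =
        ∫⁻ a : E, ENNReal.ofReal (‖a‖ ^ (-s)) ∂(volume.restrict (ball (0:E) ρ)) :=
      lintegral_enorm_of_nonneg hnn
    rw [HasFiniteIntegral, h1,
      lintegral_eq_lintegral_meas_le _ (Filter.Eventually.of_forall hnn) hmeas.aemeasurable]
    have hsub : ∀ t : ℝ, 0 < t →
        {a : E | t ≤ ‖a‖ ^ (-s)} ⊆ closedBall (0:E) (t ^ (-s⁻¹)) := by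
      intro t ht a ha
      simp only [mem_setOf_eq] at ha
      have hna : 0 < ‖a‖ := by
        by_contra h
        push_neg at h
        have : ‖a‖ = 0 := le_antisymm h (norm_nonneg a)
        rw [this, Real.zero_rpow (neg_ne_zero.mpr hs.ne')] at ha
        linarith
      rw [mem_closedBall_zero_iff]
      have := Real.rpow_le_rpow_of_nonpos ht ha (neg_nonpos.mpr (inv_nonneg.mpr hs.le))
      rwa [← Real.rpow_mul hna.le, neg_mul_neg, mul_inv_cancel₀ hs.ne',
        Real.rpow_one] at this
    have key : ∀ t : ℝ, t ∈ Ioi (0:ℝ) →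
        (volume.restrict (ball (0:E) ρ)) {a : E | t ≤ ‖a‖ ^ (-s)} ≤
          min (volume (ball (0:E) ρ))
            (ENNReal.ofReal (t ^ (-(s⁻¹ * N))) * volume (ball (0:E) 1)) := by
      intro t ht
      refine le_min ?_ ?_
      · calc (volume.restrict (ball (0:E) ρ)) {a : E | t ≤ ‖a‖ ^ (-s)}
            ≤ (volume.restrict (ball (0:E) ρ)) univ := measure_mono (subset_univ _)
          _ = volume (ball (0:E) ρ) := by simp
      · calc (volume.restrict (ball (0:E) ρ)) {a : E | t ≤ ‖a‖ ^ (-s)}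
            ≤ volume {a : E | t ≤ ‖a‖ ^ (-s)} := Measure.restrict_le_self _
          _ ≤ volume (closedBall (0:E) (t ^ (-s⁻¹))) := measure_mono (hsub t ht)
          _ = ENNReal.ofReal ((t ^ (-s⁻¹)) ^ finrank ℝ E) * volume (ball (0:E) 1) :=
            Measure.addHaar_closedBall _ _ (Real.rpow_nonneg ht.le _)
          _ = ENNReal.ofReal (t ^ (-(s⁻¹ * N))) * volume (ball (0:E) 1) := by
            rw [← Real.rpow_natCast (t ^ (-s⁻¹)) (finrank ℝ E), ← Real.rpow_mul (le_of_lt ht),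
              finrank_euclideanSpace, Fintype.card_fin, neg_mul]
    have he : -(s⁻¹ * (N:ℝ)) < -1 := by
      have : 1 < (N:ℝ) / s := (one_lt_div hs).mpr hsN
      rw [inv_mul_eq_div]
      linarith
    calc ∫⁻ t in Ioi (0:ℝ), (volume.restrict (ball (0:E) ρ)) {a : E | t ≤ ‖a‖ ^ (-s)}
        ≤ ∫⁻ t in Ioc (0:ℝ) 1 ∪ Ioi 1,
            (volume.restrict (ball (0:E) ρ)) {a : E | t ≤ ‖a‖ ^ (-s)} :=
          lintegral_mono_set Ioi_subset_Ioc_union_Ioi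
      _ ≤ (∫⁻ t in Ioc (0:ℝ) 1, (volume.restrict (ball (0:E) ρ)) {a : E | t ≤ ‖a‖ ^ (-s)})
            + ∫⁻ t in Ioi (1:ℝ), (volume.restrict (ball (0:E) ρ)) {a : E | t ≤ ‖a‖ ^ (-s)} :=
          lintegral_union_le _ _ _
      _ < ⊤ := by
          refine ENNReal.add_lt_top.2 ⟨?_, ?_⟩
          · calc ∫⁻ t in Ioc (0:ℝ) 1, (volume.restrict (ball (0:E) ρ)) {a : E | t ≤ ‖a‖ ^ (-s)}
                ≤ ∫⁻ _ in Ioc (0:ℝ) 1, volume (ball (0:E) ρ) :=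
                  setLIntegral_mono' measurableSet_Ioc
                    (fun t ht => ((key t ht.1).trans (min_le_left _ _)))
              _ = volume (ball (0:E) ρ) * volume (Ioc (0:ℝ) 1) := setLIntegral_const _ _
              _ < ⊤ := ENNReal.mul_lt_top measure_ball_lt_top (by simp)
          · calc ∫⁻ t in Ioi (1:ℝ), (volume.restrict (ball (0:E) ρ)) {a : E | t ≤ ‖a‖ ^ (-s)}
                ≤ ∫⁻ t in Ioi (1:ℝ),
                    ENNReal.ofReal (t ^ (-(s⁻¹ * N))) * volume (ball (0:E) 1) :=
                  setLIntegral_mono' measurableSet_Ioi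
                    (fun t ht => ((key t (mem_Ioi.mpr (lt_trans zero_lt_one (mem_Ioi.mp ht)))).trans (min_le_right _ _)))
              _ = (∫⁻ t in Ioi (1:ℝ), ENNReal.ofReal (t ^ (-(s⁻¹ * N))))
                    * volume (ball (0:E) 1) := lintegral_mul_const' _ _ measure_ball_lt_top.ne
              _ < ⊤ := by
                  refine ENNReal.mul_lt_top ?_ measure_ball_lt_top
                  exact IntegrableOn.setLIntegral_lt_top
                    (integrableOn_Ioi_rpow_of_lt he zero_lt_one)

lemma kernel_ball_value (hN : 3 ≤ N) {ρ : ℝ} (hρ : 0 < ρ) :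
    ∫ z in ball (0:E) ρ, ‖z‖ ^ (-((N:ℝ)-2)) =
      ρ ^ 2 * ∫ u in ball (0:E) 1, ‖u‖ ^ (-((N:ℝ)-2)) := by
  have hN3 : (3:ℝ) ≤ (N:ℝ) := by exact_mod_cast hN
  set s : ℝ := (N:ℝ) - 2 with hs_def
  have h := Measure.setIntegral_comp_smul_of_pos (volume) (fun z : E => ‖z‖ ^ (-s))
    (ball (0:E) 1) hρ
  rw [smul_unitBall_of_pos hρ] at h
  have h2 : ∀ u : E, ‖ρ • u‖ ^ (-s) = ρ ^ (-s) * ‖u‖ ^ (-s) := by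
    intro u
    rw [norm_smul, Real.norm_eq_abs, abs_of_pos hρ, Real.mul_rpow hρ.le (norm_nonneg u)]
  simp only [h2] at h
  rw [MeasureTheory.integral_const_mul] at h
  have hfr : finrank ℝ E = N := by
    rw [finrank_euclideanSpace, Fintype.card_fin]
  rw [hfr, smul_eq_mul] at h
  have hpow : (ρ ^ N : ℝ) * ρ ^ (-s) = ρ ^ 2 := by
    rw [← Real.rpow_natCast ρ N, ← Real.rpow_natCast ρ 2,
      ← Real.rpow_add hρ]
    norm_num [hs_def]
  calc ∫ z in ball (0:E) ρ, ‖z‖ ^ (-s)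
      = (ρ ^ N) * ((ρ ^ N : ℝ)⁻¹ * ∫ z in ball (0:E) ρ, ‖z‖ ^ (-s)) := by
        field_simp
    _ = (ρ ^ N) * (ρ ^ (-s) * ∫ u in ball (0:E) 1, ‖u‖ ^ (-s)) := by rw [← h]
    _ = ρ ^ 2 * ∫ u in ball (0:E) 1, ‖u‖ ^ (-s) := by rw [← mul_assoc, hpow]

lemma kernel_transl (hN : 3 ≤ N) (x : E) {ρ : ℝ} (hρ : 0 < ρ) :
    IntegrableOn (fun y : E => ‖x - y‖ ^ (-((N:ℝ)-2))) (ball x ρ) ∧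
    ∫ y in ball x ρ, ‖x - y‖ ^ (-((N:ℝ)-2)) = ∫ z in ball (0:E) ρ, ‖z‖ ^ (-((N:ℝ)-2)) := by
  set s : ℝ := (N:ℝ) - 2 with hs_def
  set f : E → ℝ := fun z => ‖z‖ ^ (-s) with hf_def
  have hmeasf : Measurable f := by fun_prop
  have hind : Integrable ((ball (0:E) ρ).indicator f) := by
    rw [integrable_indicator_iff measurableSet_ball]
    exact kernelIntOn hN hρ
  have hcomp : Integrable (fun y : E => (ball (0:E) ρ).indicator f (x - y)) :=
    hind.comp_sub_left x
  have heq : (fun y : E => (ball (0:E) ρ).indicator f (x - y)) =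
      (ball x ρ).indicator (fun y => f (x - y)) := by
    ext y
    by_cases hy : y ∈ ball x ρ
    · have hxy : x - y ∈ ball (0:E) ρ := by
        rw [mem_ball_zero_iff, ← dist_eq_norm, dist_comm]
        exact mem_ball.mp hy
      rw [indicator_of_mem hxy, indicator_of_mem hy]
    · have hxy : x - y ∉ ball (0:E) ρ := by
        rw [mem_ball_zero_iff, ← dist_eq_norm, dist_comm]
        exact fun h => hy (mem_ball.mpr h)
      rw [indicator_of_notMem hxy, indicator_of_notMem hy]
  constructor
  · rw [← integrable_indicator_iff measurableSet_ball, ← heq]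
    exact hcomp
  · rw [← integral_indicator measurableSet_ball, ← heq,
      integral_sub_left_eq_self (fun y => (ball (0:E) ρ).indicator f y) volume x,
      integral_indicator measurableSet_ball]

lemma w_integrable (hN : 3 ≤ N) :
    Integrable (fun y : E => ((1:ℝ) + ‖y‖^2) ^ (-((N:ℝ)+2)/2)) := by
  have : (finrank ℝ E : ℝ) < (N:ℝ) + 2 := by
    rw [finrank_euclideanSpace, Fintype.card_fin]; linarith
  exact integrable_rpow_neg_one_add_norm_sq this

lemma main_bound (hN : 3 ≤ N) (x : E) :
    Integrable (fun y : E => ((1:ℝ)+‖y‖^2) ^ (-((N:ℝ)+2)/2) * ‖x - y‖ ^ (-((N:ℝ)-2))) ∧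
    ∫ y : E, ((1:ℝ)+‖y‖^2) ^ (-((N:ℝ)+2)/2) * ‖x - y‖ ^ (-((N:ℝ)-2)) ≤
      (4 ^ (((N:ℝ)+2)/2) * (∫ u in ball (0:E) 1, ‖u‖ ^ (-((N:ℝ)-2)))
        + 2 ^ ((N:ℝ)-2) * (∫ y : E, ((1:ℝ)+‖y‖^2) ^ (-((N:ℝ)+2)/2)))
        * ((1:ℝ)+‖x‖^2) ^ (-((N:ℝ)-2)/2) := by
  have hN3 : (3:ℝ) ≤ (N:ℝ) := by exact_mod_cast hN
  set s : ℝ := (N:ℝ) - 2 with hs_def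
  have hs : 0 < s := by simp only [hs_def]; linarith
  set w : E → ℝ := fun y => ((1:ℝ)+‖y‖^2) ^ (-((N:ℝ)+2)/2) with hw_def
  set K : E → ℝ := fun y => ‖x - y‖ ^ (-s) with hK_def
  have hwnn : ∀ y, 0 ≤ w y := fun y => by positivity
  have hKnn : ∀ y, 0 ≤ K y := fun y => by positivity
  have hwle : ∀ y, w y ≤ ((1:ℝ)+‖y‖^2) ^ (-((N:ℝ)+2)/2) := fun y => le_refl _
  set A : ℝ := (1:ℝ) + ‖x‖^2 with hA_def
  have hA1 : 1 ≤ A := by simp only [hA_def]; linarith [sq_nonneg ‖x‖]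
  have hA0 : 0 < A := lt_of_lt_of_le zero_lt_one hA1
  set ρ : ℝ := A ^ ((1:ℝ)/2) / 2 with hρ_def
  have hρ : 0 < ρ := by positivity
  have hρ2 : ρ ^ 2 = A / 4 := by
    rw [hρ_def, div_pow, ← Real.rpow_natCast (A ^ ((1:ℝ)/2)) 2, ← Real.rpow_mul hA0.le]
    norm_num
  -- pointwise bound for w on the ball
  have hball_w : ∀ y ∈ ball x ρ, w y ≤ (A/4) ^ (-((N:ℝ)+2)/2) := by
    intro y hy
    have hdist : ‖x - y‖ < ρ := by
      rw [← dist_eq_norm, dist_comm]; exact mem_ball.mp hy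
    have htri : ‖x‖ ≤ ‖y‖ + ρ := by
      calc ‖x‖ = ‖(x - y) + y‖ := by rw [sub_add_cancel]
        _ ≤ ‖x - y‖ + ‖y‖ := norm_add_le _ _
        _ ≤ ρ + ‖y‖ := by linarith
        _ = ‖y‖ + ρ := by ring
    have hAy : A / 4 ≤ 1 + ‖y‖^2 := by
      have h1 : ‖x‖^2 ≤ (‖y‖ + ρ)^2 := by
        apply sq_le_sq' _ htri
        have : 0 ≤ ‖y‖ + ρ := by positivity
        linarith [norm_nonneg x]
      have h2 : (‖y‖ + ρ)^2 ≤ 2*‖y‖^2 + 2*ρ^2 := by nlinarith [sq_nonneg (‖y‖ - ρ)]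
      have h3 : A ≤ 1 + 2*‖y‖^2 + 2*(A/4) := by
        rw [hA_def]; rw [hρ2] at h2; nlinarith
      nlinarith
    exact Real.rpow_le_rpow_of_nonpos (by positivity) hAy (by linarith : -((N:ℝ)+2)/2 ≤ 0)
  -- integrability pieces
  obtain ⟨hKint, hKval⟩ := kernel_transl hN x hρ
  have hwK_meas : Measurable (fun y : E => w y * K y) := by fun_prop
  have hw_int : Integrable w := w_integrable hN
  have hib : IntegrableOn (fun y => w y * K y) (ball x ρ) := by
    refine hKint.mono' hwK_meas.aestronglyMeasurable.restrict ?_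
    filter_upwards with y
    rw [Real.norm_eq_abs, abs_of_nonneg (mul_nonneg (hwnn y) (hKnn y))]
    have hw1 : w y ≤ 1 :=
      Real.rpow_le_one_of_one_le_of_nonpos (by linarith [sq_nonneg ‖y‖]) (by linarith)
    calc w y * K y ≤ 1 * K y := mul_le_mul_of_nonneg_right hw1 (hKnn y)
      _ = K y := one_mul _
  have hic : IntegrableOn (fun y => w y * K y) (ball x ρ)ᶜ := by
    refine ((hw_int.const_mul (ρ ^ (-s))).integrableOn).mono'
      hwK_meas.aestronglyMeasurable.restrict ?_
    filter_upwards [ae_restrict_mem measurableSet_ball.compl] with y hy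
    rw [Real.norm_eq_abs, abs_of_nonneg (mul_nonneg (hwnn y) (hKnn y))]
    have hge : ρ ≤ ‖x - y‖ := by
      rw [← dist_eq_norm, dist_comm]
      exact not_lt.mp (fun h => hy (mem_ball.mpr h))
    have hK : K y ≤ ρ ^ (-s) := Real.rpow_le_rpow_of_nonpos hρ hge (neg_nonpos.mpr hs.le)
    calc w y * K y ≤ w y * ρ ^ (-s) := mul_le_mul_of_nonneg_left hK (hwnn y)
      _ = ρ ^ (-s) * w y := mul_comm _ _
  have hint : Integrable (fun y : E => w y * K y) := by
    rw [← integrableOn_univ, ← union_compl_self (ball x ρ)]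
    exact hib.union hic
  refine ⟨hint, ?_⟩
  set I1 : ℝ := ∫ u in ball (0:E) 1, ‖u‖ ^ (-s) with hI1_def
  set Cw : ℝ := ∫ y : E, w y with hCw_def
  have hI1nn : 0 ≤ I1 := setIntegral_nonneg measurableSet_ball fun y _ => by positivity
  have hCwnn : 0 ≤ Cw := integral_nonneg hwnn
  have hsplit : ∫ y : E, w y * K y =
      (∫ y in ball x ρ, w y * K y) + ∫ y in (ball x ρ)ᶜ, w y * K y :=
    (integral_add_compl measurableSet_ball hint).symm
  have hT1 : ∫ y in ball x ρ, w y * K y ≤ (A/4) ^ (-((N:ℝ)+2)/2) * ((A/4) * I1) := by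
    calc ∫ y in ball x ρ, w y * K y
        ≤ ∫ y in ball x ρ, (A/4) ^ (-((N:ℝ)+2)/2) * K y := by
          refine setIntegral_mono_on hib (hKint.const_mul _) measurableSet_ball ?_
          intro y hy
          exact mul_le_mul_of_nonneg_right (hball_w y hy) (hKnn y)
      _ = (A/4) ^ (-((N:ℝ)+2)/2) * ∫ y in ball x ρ, K y := MeasureTheory.integral_const_mul _ _
      _ = (A/4) ^ (-((N:ℝ)+2)/2) * ((A/4) * I1) := by
          rw [hKval, kernel_ball_value hN hρ, hρ2]
  have hT2 : ∫ y in (ball x ρ)ᶜ, w y * K y ≤ ρ ^ (-s) * Cw := by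
    calc ∫ y in (ball x ρ)ᶜ, w y * K y
        ≤ ∫ y in (ball x ρ)ᶜ, ρ ^ (-s) * w y := by
          refine setIntegral_mono_on hic ((hw_int.const_mul _).integrableOn)
            measurableSet_ball.compl ?_
          intro y hy
          have hge : ρ ≤ ‖x - y‖ := by
            rw [← dist_eq_norm, dist_comm]
            exact not_lt.mp (fun h => hy (mem_ball.mpr h))
          have hK : K y ≤ ρ ^ (-s) :=
            Real.rpow_le_rpow_of_nonpos hρ hge (neg_nonpos.mpr hs.le)
          calc w y * K y ≤ w y * ρ ^ (-s) := mul_le_mul_of_nonneg_left hK (hwnn y)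
            _ = ρ ^ (-s) * w y := mul_comm _ _
      _ = ρ ^ (-s) * ∫ y in (ball x ρ)ᶜ, w y := MeasureTheory.integral_const_mul _ _
      _ ≤ ρ ^ (-s) * Cw := by
          have := setIntegral_le_integral hw_int (Filter.Eventually.of_forall hwnn)
            (s := (ball x ρ)ᶜ)
          exact mul_le_mul_of_nonneg_left this (Real.rpow_nonneg hρ.le _)
  -- rpow algebra
  have hdiv : (A/4 : ℝ) ^ (-((N:ℝ)+2)/2) = A ^ (-((N:ℝ)+2)/2) * 4 ^ (((N:ℝ)+2)/2) := by
    rw [Real.div_rpow hA0.le (by norm_num : (0:ℝ) ≤ 4), div_eq_mul_inv,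
      ← Real.rpow_neg (by norm_num : (0:ℝ) ≤ 4),
      show -(-((N:ℝ)+2)/2) = ((N:ℝ)+2)/2 from by ring]
  have hAe : A ^ (-((N:ℝ)+2)/2) * (A/4) ≤ A ^ (-s/2) := by
    calc A ^ (-((N:ℝ)+2)/2) * (A/4) ≤ A ^ (-((N:ℝ)+2)/2) * A := by
          refine mul_le_mul_of_nonneg_left (by linarith) (Real.rpow_nonneg hA0.le _)
      _ = A ^ (-(N:ℝ)/2) := by
          rw [← Real.rpow_add_one hA0.ne', show -((N:ℝ)+2)/2 + 1 = -(N:ℝ)/2 from by ring]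
      _ ≤ A ^ (-s/2) := Real.rpow_le_rpow_of_exponent_le hA1 (by rw [hs_def]; linarith)
  have hT1' : (A/4) ^ (-((N:ℝ)+2)/2) * ((A/4) * I1) ≤
      4 ^ (((N:ℝ)+2)/2) * I1 * A ^ (-s/2) := by
    rw [hdiv]
    calc A ^ (-((N:ℝ)+2)/2) * 4 ^ (((N:ℝ)+2)/2) * ((A/4) * I1)
        = (4 ^ (((N:ℝ)+2)/2) * I1) * (A ^ (-((N:ℝ)+2)/2) * (A/4)) := by ring
      _ ≤ (4 ^ (((N:ℝ)+2)/2) * I1) * A ^ (-s/2) := by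
          refine mul_le_mul_of_nonneg_left hAe (by positivity)
      _ = 4 ^ (((N:ℝ)+2)/2) * I1 * A ^ (-s/2) := by ring
  have hρs : ρ ^ (-s) = 2 ^ s * A ^ (-s/2) := by
    rw [hρ_def, Real.div_rpow (Real.rpow_nonneg hA0.le _) (by norm_num : (0:ℝ) ≤ 2),
      Real.rpow_neg (by norm_num : (0:ℝ) ≤ 2), div_inv_eq_mul,
      ← Real.rpow_mul hA0.le, show (1:ℝ)/2 * (-s) = -s/2 from by ring, mul_comm]
  have hfinal : (∫ y : E, w y * K y) ≤
      (4 ^ (((N:ℝ)+2)/2) * I1 + 2 ^ s * Cw) * A ^ (-s/2) := by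
    rw [hsplit]
    calc (∫ y in ball x ρ, w y * K y) + ∫ y in (ball x ρ)ᶜ, w y * K y
        ≤ (A/4) ^ (-((N:ℝ)+2)/2) * ((A/4) * I1) + ρ ^ (-s) * Cw := add_le_add hT1 hT2
      _ ≤ 4 ^ (((N:ℝ)+2)/2) * I1 * A ^ (-s/2) + 2 ^ s * A ^ (-s/2) * Cw := by
          rw [hρs]
          exact add_le_add hT1' (le_refl _)
      _ = (4 ^ (((N:ℝ)+2)/2) * I1 + 2 ^ s * Cw) * A ^ (-s/2) := by ring
  convert hfinal using 3 <;> ring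

theorem stmt9 (N : ℕ) (hN : 3 ≤ N) :
    ∃ C > 0, ∀ g : EuclideanSpace ℝ (Fin N) → ℝ, Continuous g →
      ∀ M : ℝ, (∀ x, (1 + ‖x‖ ^ 2) ^ (((N : ℝ) + 2) / 2) * |g x| ≤ M) →
        ∀ x : EuclideanSpace ℝ (Fin N),
          (1 + ‖x‖ ^ 2) ^ (((N : ℝ) - 2) / 2) *
            |((N : ℝ) * ((N : ℝ) - 2) *
                (2 * π ^ ((N : ℝ) / 2) / ((N : ℝ) * Gamma ((N : ℝ) / 2))))⁻¹ *
              ∫ y : EuclideanSpace ℝ (Fin N), g y * ‖x - y‖ ^ (-((N : ℝ) - 2))|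
            ≤ C * M := by
  have hN3 : (3:ℝ) ≤ (N:ℝ) := by exact_mod_cast hN
  set c : ℝ := (N:ℝ) * ((N:ℝ)-2) * (2 * π ^ ((N:ℝ)/2) / ((N:ℝ) * Gamma ((N:ℝ)/2)))
    with hc_def
  have hΓ : 0 < Gamma ((N:ℝ)/2) := Real.Gamma_pos_of_pos (by linarith)
  have hπ : (0:ℝ) < π ^ ((N:ℝ)/2) := Real.rpow_pos_of_pos Real.pi_pos _
  have hc : 0 < c := by
    apply mul_pos (mul_pos (by linarith) (by linarith))
    exact div_pos (by linarith) (mul_pos (by linarith) hΓ)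
  set I1 : ℝ := ∫ u in ball (0:EuclideanSpace ℝ (Fin N)) 1, ‖u‖ ^ (-((N:ℝ)-2)) with hI1_def
  set Cw : ℝ := ∫ y : EuclideanSpace ℝ (Fin N), ((1:ℝ)+‖y‖^2) ^ (-((N:ℝ)+2)/2) with hCw_def
  have hI1nn : 0 ≤ I1 := setIntegral_nonneg measurableSet_ball fun y _ => by positivity
  have hCwnn : 0 ≤ Cw := integral_nonneg fun y => by positivity
  set C0 : ℝ := 4 ^ (((N:ℝ)+2)/2) * I1 + 2 ^ ((N:ℝ)-2) * Cw with hC0_def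
  have hC0nn : 0 ≤ C0 := by positivity
  refine ⟨c⁻¹ * (C0 + 1), by positivity, ?_⟩
  intro g _hg M hM x
  have hM0 : 0 ≤ M := le_trans (by positivity) (hM 0)
  obtain ⟨hint, hbound⟩ := main_bound hN x
  have hptw : ∀ y : EuclideanSpace ℝ (Fin N), ‖g y * ‖x - y‖ ^ (-((N:ℝ)-2))‖ ≤
      M * (((1:ℝ)+‖y‖^2) ^ (-((N:ℝ)+2)/2) * ‖x - y‖ ^ (-((N:ℝ)-2))) := by
    intro y
    rw [Real.norm_eq_abs, abs_mul,
      abs_of_nonneg (by positivity : (0:ℝ) ≤ ‖x - y‖ ^ (-((N:ℝ)-2)))]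
    have hb : |g y| ≤ M * ((1:ℝ)+‖y‖^2) ^ (-((N:ℝ)+2)/2) := by
      have h1 := hM y
      have h2 : ((1:ℝ)+‖y‖^2) ^ (-((N:ℝ)+2)/2) * ((1:ℝ)+‖y‖^2) ^ (((N:ℝ)+2)/2) = 1 := by
        rw [← Real.rpow_add (by positivity),
          show -((N:ℝ)+2)/2 + ((N:ℝ)+2)/2 = 0 from by ring, Real.rpow_zero]
      calc |g y|
          = (((1:ℝ)+‖y‖^2) ^ (-((N:ℝ)+2)/2) * ((1:ℝ)+‖y‖^2) ^ (((N:ℝ)+2)/2)) * |g y| := by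
            rw [h2, one_mul]
        _ = ((1:ℝ)+‖y‖^2) ^ (-((N:ℝ)+2)/2) * (((1:ℝ)+‖y‖^2) ^ (((N:ℝ)+2)/2) * |g y|) := by
            ring
        _ ≤ ((1:ℝ)+‖y‖^2) ^ (-((N:ℝ)+2)/2) * M :=
            mul_le_mul_of_nonneg_left h1 (by positivity)
        _ = M * ((1:ℝ)+‖y‖^2) ^ (-((N:ℝ)+2)/2) := mul_comm _ _
    calc |g y| * ‖x - y‖ ^ (-((N:ℝ)-2))
        ≤ (M * ((1:ℝ)+‖y‖^2) ^ (-((N:ℝ)+2)/2)) * ‖x - y‖ ^ (-((N:ℝ)-2)) :=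
          mul_le_mul_of_nonneg_right hb (by positivity)
      _ = M * (((1:ℝ)+‖y‖^2) ^ (-((N:ℝ)+2)/2) * ‖x - y‖ ^ (-((N:ℝ)-2))) := by ring
  have hInt : |∫ y : EuclideanSpace ℝ (Fin N), g y * ‖x - y‖ ^ (-((N:ℝ)-2))| ≤
      M * (C0 * ((1:ℝ)+‖x‖^2) ^ (-((N:ℝ)-2)/2)) := by
    have h1 : ‖∫ y : EuclideanSpace ℝ (Fin N), g y * ‖x - y‖ ^ (-((N:ℝ)-2))‖ ≤
        ∫ y : EuclideanSpace ℝ (Fin N),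
          M * (((1:ℝ)+‖y‖^2) ^ (-((N:ℝ)+2)/2) * ‖x - y‖ ^ (-((N:ℝ)-2))) :=
      norm_integral_le_of_norm_le (hint.const_mul M) (Filter.Eventually.of_forall hptw)
    rw [Real.norm_eq_abs, MeasureTheory.integral_const_mul] at h1
    exact h1.trans (mul_le_mul_of_nonneg_left hbound hM0)
  have hprod : ((1:ℝ)+‖x‖^2) ^ (((N:ℝ)-2)/2) * ((1:ℝ)+‖x‖^2) ^ (-((N:ℝ)-2)/2) = 1 := by
    rw [← Real.rpow_add (by positivity),
      show ((N:ℝ)-2)/2 + -((N:ℝ)-2)/2 = 0 from by ring, Real.rpow_zero]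
  rw [abs_mul, abs_of_nonneg (inv_nonneg.mpr hc.le)]
  calc ((1:ℝ)+‖x‖^2) ^ (((N:ℝ)-2)/2) *
        (c⁻¹ * |∫ y : EuclideanSpace ℝ (Fin N), g y * ‖x - y‖ ^ (-((N:ℝ)-2))|)
      ≤ ((1:ℝ)+‖x‖^2) ^ (((N:ℝ)-2)/2) *
          (c⁻¹ * (M * (C0 * ((1:ℝ)+‖x‖^2) ^ (-((N:ℝ)-2)/2)))) := by
        refine mul_le_mul_of_nonneg_left
          (mul_le_mul_of_nonneg_left hInt (inv_nonneg.mpr hc.le)) (by positivity)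
    _ = c⁻¹ * (C0 * M) *
          (((1:ℝ)+‖x‖^2) ^ (((N:ℝ)-2)/2) * ((1:ℝ)+‖x‖^2) ^ (-((N:ℝ)-2)/2)) := by ring
    _ = c⁻¹ * (C0 * M) := by rw [hprod, mul_one]
    _ ≤ c⁻¹ * (C0 + 1) * M := by
        nlinarith [mul_nonneg (inv_nonneg.mpr hc.le) hM0]
end

section
/- Let N ≥ 3, U_{μ,ξ}(x) = μ^{−(N−2)/2}(1+|x−ξ|²/μ²)^{−(N−2)/2}. Fix (μ₀,ξ₀) ∈ (0,∞)×ℝ^N. Then as (μ,ξ) → (μ₀,ξ₀), uniformly in x: U_{μ,ξ}(x) = U_{μ₀,ξ₀}(x) + Z_{0;μ₀,ξ₀}(x)(μ−μ₀)/μ₀ + Σ_{j=1}^N Z_{j;μ₀,ξ₀}(x)(ξ_j−ξ_{0j})/μ₀ + U_{μ₀,ξ₀}(x)·O(|μ−μ₀|²/μ₀² + |ξ−ξ₀|²/μ₀²), where Z_{j;μ₀,ξ₀}(x) = μ₀^{−(N−2)/2} Z_j((x−ξ₀)/μ₀). -/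
open MeasureTheory Real

/-- The bubble `U_{μ,ξ}`. -/
noncomputable def Ubub {N : ℕ} (μ : ℝ) (ξ x : EuclideanSpace ℝ (Fin N)) : ℝ :=
  μ ^ (-(((N : ℝ) - 2) / 2)) * (1 + ‖x - ξ‖ ^ 2 / μ ^ 2) ^ (-(((N : ℝ) - 2) / 2))

/-- `Z₀`. -/
noncomputable def Zzero {N : ℕ} (y : EuclideanSpace ℝ (Fin N)) : ℝ :=
  ((N : ℝ) - 2) / 2 * (‖y‖ ^ 2 - 1) * (1 + ‖y‖ ^ 2) ^ (-((N : ℝ) / 2))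

/-- `Z_j` for `j = 1,…,N`. -/
noncomputable def Zcoord {N : ℕ} (j : Fin N) (y : EuclideanSpace ℝ (Fin N)) : ℝ :=
  ((N : ℝ) - 2) * y j * (1 + ‖y‖ ^ 2) ^ (-((N : ℝ) / 2))


noncomputable def Fb (p μ₀ dμ A B W t : ℝ) : ℝ :=
  (μ₀ + t * dμ) ^ p * ((μ₀ + t * dμ) ^ 2 + (A - 2 * t * B + t ^ 2 * W)) ^ (-p)

noncomputable def Fb1 (p μ₀ dμ A B W t : ℝ) : ℝ :=
  dμ * p * (μ₀ + t * dμ) ^ (p - 1) *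
      ((μ₀ + t * dμ) ^ 2 + (A - 2 * t * B + t ^ 2 * W)) ^ (-p)
    + (μ₀ + t * dμ) ^ p *
      ((2 * (μ₀ + t * dμ) * dμ + (2 * t * W - 2 * B)) * -p *
        ((μ₀ + t * dμ) ^ 2 + (A - 2 * t * B + t ^ 2 * W)) ^ (-p - 1))

lemma hd_m (μ₀ dμ t : ℝ) : HasDerivAt (fun t : ℝ => μ₀ + t * dμ) dμ t := by
  simpa using ((hasDerivAt_id t).mul_const dμ).const_add μ₀

lemma hd_q (μ₀ dμ A B W t : ℝ) :
    HasDerivAt (fun t : ℝ => (μ₀ + t * dμ) ^ 2 + (A - 2 * t * B + t ^ 2 * W))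
      (2 * (μ₀ + t * dμ) * dμ + (2 * t * W - 2 * B)) t := by
  have h1 := ((hd_m μ₀ dμ t).pow 2)
  have h2 : HasDerivAt (fun t : ℝ => A - 2 * t * B + t ^ 2 * W) (2 * t * W - 2 * B) t := by
    have ha : HasDerivAt (fun t : ℝ => A - 2 * t * B) (-(2 * B)) t := by
      simpa using (((hasDerivAt_id t).const_mul 2).mul_const B).const_sub A
    have hb : HasDerivAt (fun t : ℝ => t ^ 2 * W) (2 * t * W) t := by
      have := (hasDerivAt_pow 2 t).mul_const W
      exact this.congr_deriv (by ring)
    exact (ha.add hb).congr_deriv (by ring)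
  exact (h1.add h2).congr_deriv (by ring)

lemma hd_F (p μ₀ dμ A B W t : ℝ) (hm : μ₀ + t * dμ ≠ 0)
    (hq : (μ₀ + t * dμ) ^ 2 + (A - 2 * t * B + t ^ 2 * W) ≠ 0) :
    HasDerivAt (fun t => Fb p μ₀ dμ A B W t) (Fb1 p μ₀ dμ A B W t) t := by
  have h1 := (hd_m μ₀ dμ t).rpow_const (p := p) (Or.inl hm)
  have h2 := (hd_q μ₀ dμ A B W t).rpow_const (p := -p) (Or.inl hq)
  have := h1.mul h2
  unfold Fb Fb1
  exact this

noncomputable def Fb2 (p μ₀ dμ A B W t : ℝ) : ℝ :=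
  (dμ * p * (dμ * (p - 1) * (μ₀ + t * dμ) ^ (p - 1 - 1)) *
      ((μ₀ + t * dμ) ^ 2 + (A - 2 * t * B + t ^ 2 * W)) ^ (-p)
    + dμ * p * (μ₀ + t * dμ) ^ (p - 1) *
      ((2 * (μ₀ + t * dμ) * dμ + (2 * t * W - 2 * B)) * -p *
        ((μ₀ + t * dμ) ^ 2 + (A - 2 * t * B + t ^ 2 * W)) ^ (-p - 1)))
  + (dμ * p * (μ₀ + t * dμ) ^ (p - 1) *
      ((2 * (μ₀ + t * dμ) * dμ + (2 * t * W - 2 * B)) * -p *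
        ((μ₀ + t * dμ) ^ 2 + (A - 2 * t * B + t ^ 2 * W)) ^ (-p - 1))
    + (μ₀ + t * dμ) ^ p *
      ((2 * dμ * dμ + 2 * W) * -p *
          ((μ₀ + t * dμ) ^ 2 + (A - 2 * t * B + t ^ 2 * W)) ^ (-p - 1)
        + (2 * (μ₀ + t * dμ) * dμ + (2 * t * W - 2 * B)) * -p *
          ((2 * (μ₀ + t * dμ) * dμ + (2 * t * W - 2 * B)) * (-p - 1) *
            ((μ₀ + t * dμ) ^ 2 + (A - 2 * t * B + t ^ 2 * W)) ^ (-p - 1 - 1))))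

lemma hd_q1 (μ₀ dμ A B W t : ℝ) :
    HasDerivAt (fun t : ℝ => 2 * (μ₀ + t * dμ) * dμ + (2 * t * W - 2 * B))
      (2 * dμ * dμ + 2 * W) t := by
  have h1 : HasDerivAt (fun t : ℝ => 2 * (μ₀ + t * dμ) * dμ) (2 * dμ * dμ) t := by
    have := ((hd_m μ₀ dμ t).const_mul 2).mul_const dμ
    convert this using 1
  have h2 : HasDerivAt (fun t : ℝ => 2 * t * W - 2 * B) (2 * W) t := by
    have := (((hasDerivAt_id t).const_mul 2).mul_const W).sub_const (2 * B)
    exact this.congr_deriv (by ring)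
  exact h1.add h2

lemma hd_F1 (p μ₀ dμ A B W t : ℝ) (hm : μ₀ + t * dμ ≠ 0)
    (hq : (μ₀ + t * dμ) ^ 2 + (A - 2 * t * B + t ^ 2 * W) ≠ 0) :
    HasDerivAt (fun t => Fb1 p μ₀ dμ A B W t) (Fb2 p μ₀ dμ A B W t) t := by
  have hm1 := (hd_m μ₀ dμ t).rpow_const (p := p - 1) (Or.inl hm)
  have hmP := (hd_m μ₀ dμ t).rpow_const (p := p) (Or.inl hm)
  have hQ1 := (hd_q μ₀ dμ A B W t).rpow_const (p := -p) (Or.inl hq)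
  have hQ2 := (hd_q μ₀ dμ A B W t).rpow_const (p := -p - 1) (Or.inl hq)
  have hS1 := (hm1.const_mul (dμ * p)).mul hQ1
  have hinner := ((hd_q1 μ₀ dμ A B W t).mul_const (-p)).mul hQ2
  have hS2 := hmP.mul hinner
  have := hS1.add hS2
  unfold Fb1 Fb2
  exact this

set_option maxHeartbeats 2000000 in
lemma facts (μ₀ dμ A B W t : ℝ) (hμ₀ : 0 < μ₀)
    (hdμ : |dμ| ≤ μ₀/4) (hA : 0 ≤ A) (hW : 0 ≤ W) (hBW : B^2 ≤ A*W)
    (hWb : W ≤ (μ₀/4)^2) (ht0 : 0 ≤ t) (ht1 : t ≤ 1) :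
    3*μ₀/4 ≤ μ₀ + t*dμ ∧ μ₀ + t*dμ ≤ 5*μ₀/4 ∧
    0 ≤ A - 2*t*B + t^2*W ∧
    (2*(μ₀+t*dμ)*dμ + (2*t*W - 2*B))^2 ≤
      8*((μ₀+t*dμ)^2 + (A - 2*t*B + t^2*W))*(dμ^2+W) ∧
    μ₀^2 + A ≤ 4*((μ₀+t*dμ)^2 + (A - 2*t*B + t^2*W)) := by
  obtain ⟨hd1, hd2⟩ := abs_le.mp hdμ
  have hM1 : 3*μ₀/4 ≤ μ₀ + t*dμ := by nlinarith
  have hM2 : μ₀ + t*dμ ≤ 5*μ₀/4 := by nlinarith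
  have hR : 0 ≤ A - 2*t*B + t^2*W := by
    rcases eq_or_lt_of_le hW with h | h
    · have hB : B = 0 := by nlinarith [sq_nonneg B]
      simp [hB, ← h]; nlinarith
    · nlinarith [sq_nonneg (B - t*W)]
  have hBtW : (B - t*W)^2 ≤ (A - 2*t*B + t^2*W)*W := by nlinarith
  refine ⟨hM1, hM2, hR, ?_, ?_⟩
  · nlinarith [sq_nonneg (2*(μ₀+t*dμ)*dμ - (2*t*W - 2*B)), sq_nonneg (μ₀+t*dμ), sq_nonneg dμ, hBtW, hR, mul_nonneg hR hW]
  · -- μ₀^2 + A ≤ 4*Q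
    have h16 : 16*B^2 ≤ A*μ₀^2 := by nlinarith
    have key1 : (8*t*B)^2 ≤ (t^2*A + μ₀^2)^2 := by
      nlinarith [mul_le_mul_of_nonneg_left h16 (by positivity : (0:ℝ) ≤ 4*t^2), sq_nonneg (t^2*A - μ₀^2)]
    have key2 : 8*t*B ≤ t^2*A + μ₀^2 :=
      (abs_le_of_sq_le_sq' key1 (by positivity)).2
    have hM1sq : 9/16*μ₀^2 ≤ (μ₀ + t*dμ)^2 := by nlinarith [hM1, hμ₀]
    have htA : t^2*A ≤ A := by nlinarith [mul_nonneg hA (sub_nonneg.mpr (by nlinarith [sq_nonneg t] : t^2 ≤ 1))]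
    have htW : 0 ≤ t^2*W := mul_nonneg (sq_nonneg t) hW
    linarith [key2, hM1sq, htA, htW]

set_option maxHeartbeats 1000000 in
lemma Pbound (p M Q q1 dμ W : ℝ) (hp : 1/2 ≤ p) (hQM : M^2 ≤ Q) (hMpos : 0 < M)
    (hq1 : q1^2 ≤ 8*Q*(dμ^2+W)) (hW : 0 ≤ W) :
    |p*(p-1)*dμ^2*Q^2 - 2*p^2*dμ*q1*M*Q - 2*p*(dμ^2+W)*M^2*Q + p*(p+1)*q1^2*M^2|
      ≤ 18*(p+1)^2 * ((dμ^2+W) * Q^2) := by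
  have hQpos : 0 < Q := lt_of_lt_of_le (by positivity) hQM
  have hp0 : (0:ℝ) ≤ p := by linarith
  have he0 : (0:ℝ) ≤ dμ^2 + W := by positivity
  have u2 : -(2*p^2*dμ*q1*M*Q) ≤ p^2*Q*(M^2*dμ^2) + p^2*Q*q1^2 := by
    nlinarith [mul_nonneg (mul_nonneg (sq_nonneg p) hQpos.le) (sq_nonneg (M*dμ + q1))]
  have l2 : 2*p^2*dμ*q1*M*Q ≤ p^2*Q*(M^2*dμ^2) + p^2*Q*q1^2 := by
    nlinarith [mul_nonneg (mul_nonneg (sq_nonneg p) hQpos.le) (sq_nonneg (M*dμ - q1))]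
  have u3 : p^2*Q*(M^2*dμ^2) ≤ p^2*((dμ^2+W)*Q^2) := by
    nlinarith [mul_le_mul_of_nonneg_left hQM
        (mul_nonneg (mul_nonneg (sq_nonneg p) (sq_nonneg dμ)) hQpos.le),
      mul_nonneg (mul_nonneg (sq_nonneg p) hW) (sq_nonneg Q)]
  have u4 : p^2*Q*q1^2 ≤ 8*p^2*((dμ^2+W)*Q^2) := by
    nlinarith [mul_le_mul_of_nonneg_left hq1 (mul_nonneg (sq_nonneg p) hQpos.le)]
  have u5 : p*(p+1)*q1^2*M^2 ≤ 8*p*(p+1)*((dμ^2+W)*Q^2) := by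
    have h1 : q1^2*M^2 ≤ (8*Q*(dμ^2+W))*Q := by
      have := mul_le_mul hq1 hQM (sq_nonneg M) (by positivity : (0:ℝ) ≤ 8*Q*(dμ^2+W))
      linarith
    nlinarith [mul_le_mul_of_nonneg_left h1 (by positivity : (0:ℝ) ≤ p*(p+1))]
  have u1 : p*(p-1)*dμ^2*Q^2 ≤ p*(p+1)*((dμ^2+W)*Q^2) := by
    nlinarith [mul_nonneg (mul_nonneg hp0 (sq_nonneg dμ)) (sq_nonneg Q),
      mul_nonneg (mul_nonneg (mul_nonneg hp0 (by linarith : (0:ℝ) ≤ p+1)) hW) (sq_nonneg Q)]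
  have l1 : -(p*(p-1)*dμ^2*Q^2) ≤ p*(p+1)*((dμ^2+W)*Q^2) := by
    nlinarith [mul_nonneg (mul_nonneg (sq_nonneg p) (sq_nonneg dμ)) (sq_nonneg Q),
      mul_nonneg (mul_nonneg hp0 hW) (sq_nonneg Q),
      mul_nonneg (mul_nonneg hp0 (sq_nonneg dμ)) (sq_nonneg Q)]
  have l3 : 2*p*(dμ^2+W)*M^2*Q ≤ 2*p*((dμ^2+W)*Q^2) := by
    nlinarith [mul_le_mul_of_nonneg_left hQM
      (mul_nonneg (mul_nonneg (by linarith : (0:ℝ) ≤ 2*p) he0) hQpos.le)]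
  have u6 : 0 ≤ 2*p*(dμ^2+W)*M^2*Q := by positivity
  have l4 : 0 ≤ p*(p+1)*q1^2*M^2 := by positivity
  have u7 : 0 ≤ (27*p+18)*((dμ^2+W)*Q^2) := by positivity
  rw [abs_le]
  constructor <;> nlinarith [u1, u2, u3, u4, u5, u6, l1, l2, l3, l4, u7]

set_option maxHeartbeats 1000000 in
lemma Fb2_abstract (p dμ W μ₀ A M Q q1 : ℝ) (hp : 1/2 ≤ p) (hμ₀ : 0 < μ₀)
    (hA : 0 ≤ A) (hW : 0 ≤ W)
    (hM1 : 3*μ₀/4 ≤ M) (hM2' : M ≤ 5*μ₀/4) (hMQ : M^2 ≤ Q)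
    (hq1sq : q1^2 ≤ 8*Q*(dμ^2+W)) (hQ0 : μ₀^2 + A ≤ 4*Q) :
    |dμ * p * (dμ * (p - 1) * M ^ (p - 1 - 1)) * Q ^ (-p)
      + dμ * p * M ^ (p - 1) * (q1 * -p * Q ^ (-p - 1))
      + (dμ * p * M ^ (p - 1) * (q1 * -p * Q ^ (-p - 1))
        + M ^ p * ((2 * dμ * dμ + 2 * W) * -p * Q ^ (-p - 1)
          + q1 * -p * (q1 * (-p - 1) * Q ^ (-p - 1 - 1))))| ≤
      32*(p+1)^2 * 5^p * (μ₀^p * (μ₀^2+A)^(-p)) * ((dμ^2+W)/μ₀^2) := by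
  have hMpos : 0 < M := by nlinarith
  have hQpos : 0 < Q := lt_of_lt_of_le (by positivity) hMQ
  have e1 : M^(p-1) = M^p / M := by rw [rpow_sub hMpos, rpow_one]
  have e2 : M^(p-1-1) = M^p / M / M := by rw [rpow_sub hMpos, rpow_sub hMpos, rpow_one]
  have e3 : Q^(-p-1) = Q^(-p) / Q := by rw [rpow_sub hQpos, rpow_one]
  have e4 : Q^(-p-1-1) = Q^(-p) / Q / Q := by rw [rpow_sub hQpos, rpow_sub hQpos, rpow_one]
  have hF2eq : dμ * p * (dμ * (p - 1) * M ^ (p - 1 - 1)) * Q ^ (-p)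
      + dμ * p * M ^ (p - 1) * (q1 * -p * Q ^ (-p - 1))
      + (dμ * p * M ^ (p - 1) * (q1 * -p * Q ^ (-p - 1))
        + M ^ p * ((2 * dμ * dμ + 2 * W) * -p * Q ^ (-p - 1)
          + q1 * -p * (q1 * (-p - 1) * Q ^ (-p - 1 - 1)))) =
      (M^p * Q^(-p)) * (p*(p-1)*dμ^2*Q^2 - 2*p^2*dμ*q1*M*Q
        - 2*p*(dμ^2+W)*M^2*Q + p*(p+1)*q1^2*M^2) / (M^2*Q^2) := by
    rw [e1, e2, e3, e4]
    field_simp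
    ring
  have hPb := Pbound p M Q q1 dμ W hp hMQ hMpos hq1sq hW
  have hGpos : (0:ℝ) < M^p * Q^(-p) := by positivity
  have hQ0pos : (0:ℝ) < μ₀^2 + A := by positivity
  have hp0 : (0:ℝ) ≤ p := by linarith
  have h54 : ((5:ℝ)/4)^p * 4^p = 5^p := by
    rw [← mul_rpow (by norm_num) (by norm_num)]; norm_num
  have h4 : ((μ₀^2+A)/4 : ℝ)^(-p) = (μ₀^2+A)^(-p) * 4^p := by
    rw [div_rpow hQ0pos.le (by norm_num), rpow_neg (by norm_num : (0:ℝ) ≤ 4),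
      div_eq_mul_inv, inv_inv]
  have hG : M^p * Q^(-p) ≤ 5^p * (μ₀^p * (μ₀^2+A)^(-p)) := by
    have h1 : M^p ≤ (5/4*μ₀)^p := rpow_le_rpow hMpos.le (by linarith) hp0
    have h2 : Q^(-p) ≤ ((μ₀^2+A)/4)^(-p) :=
      rpow_le_rpow_of_nonpos (by positivity) (by linarith) (by linarith)
    calc M^p * Q^(-p) ≤ (5/4*μ₀)^p * ((μ₀^2+A)/4)^(-p) :=
          mul_le_mul h1 h2 (by positivity) (by positivity)
      _ = 5^p * (μ₀^p * (μ₀^2+A)^(-p)) := by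
          rw [mul_rpow (by norm_num) hμ₀.le, h4, ← h54]; ring
  have hM2 : (9/16)*μ₀^2 ≤ M^2 := by nlinarith
  rw [hF2eq]
  calc |(M^p * Q^(-p)) * (p*(p-1)*dμ^2*Q^2 - 2*p^2*dμ*q1*M*Q
        - 2*p*(dμ^2+W)*M^2*Q + p*(p+1)*q1^2*M^2) / (M^2*Q^2)|
      = (M^p * Q^(-p)) * |p*(p-1)*dμ^2*Q^2 - 2*p^2*dμ*q1*M*Q
        - 2*p*(dμ^2+W)*M^2*Q + p*(p+1)*q1^2*M^2| / (M^2*Q^2) := by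
        rw [abs_div, abs_mul, abs_of_nonneg hGpos.le,
          abs_of_nonneg (by positivity : (0:ℝ) ≤ M^2*Q^2)]
    _ ≤ (M^p * Q^(-p)) * (18*(p+1)^2 * ((dμ^2+W) * Q^2)) / (M^2*Q^2) := by gcongr
    _ = 18*(p+1)^2 * (dμ^2+W) * (M^p * Q^(-p)) / M^2 := by
        field_simp
    _ ≤ 18*(p+1)^2 * (dμ^2+W) * (5^p * (μ₀^p * (μ₀^2+A)^(-p))) / ((9/16)*μ₀^2) := by
        gcongr
    _ = 32*(p+1)^2 * 5^p * (μ₀^p * (μ₀^2+A)^(-p)) * ((dμ^2+W)/μ₀^2) := by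
        field_simp; ring

lemma Fb2_le (p μ₀ dμ A B W t : ℝ) (hp : 1/2 ≤ p) (hμ₀ : 0 < μ₀)
    (hdμ : |dμ| ≤ μ₀/4) (hA : 0 ≤ A) (hW : 0 ≤ W) (hBW : B^2 ≤ A*W)
    (hWb : W ≤ (μ₀/4)^2) (ht0 : 0 ≤ t) (ht1 : t ≤ 1) :
    |Fb2 p μ₀ dμ A B W t| ≤
      32*(p+1)^2 * 5^p * (μ₀^p * (μ₀^2+A)^(-p)) * ((dμ^2+W)/μ₀^2) := by
  obtain ⟨hM1, hM2', hR, hq1sq, hQ0⟩ := facts μ₀ dμ A B W t hμ₀ hdμ hA hW hBW hWb ht0 ht1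
  have := Fb2_abstract p dμ W μ₀ A (μ₀+t*dμ) ((μ₀+t*dμ)^2+(A-2*t*B+t^2*W))
    (2*(μ₀+t*dμ)*dμ+(2*t*W-2*B)) hp hμ₀ hA hW hM1 hM2' (by linarith) hq1sq hQ0
  unfold Fb2
  convert this using 2

lemma pos_on_Icc (μ₀ dμ A B W t : ℝ) (hμ₀ : 0 < μ₀)
    (hdμ : |dμ| ≤ μ₀/4) (hA : 0 ≤ A) (hW : 0 ≤ W) (hBW : B^2 ≤ A*W)
    (hWb : W ≤ (μ₀/4)^2) (ht0 : 0 ≤ t) (ht1 : t ≤ 1) :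
    0 < μ₀ + t*dμ ∧ 0 < (μ₀ + t*dμ)^2 + (A - 2*t*B + t^2*W) := by
  obtain ⟨hM1, hM2', hR, hq1sq, hQ0⟩ := facts μ₀ dμ A B W t hμ₀ hdμ hA hW hBW hWb ht0 ht1
  constructor
  · linarith
  · nlinarith

lemma core (p μ₀ dμ A B W : ℝ) (hp : 1/2 ≤ p) (hμ₀ : 0 < μ₀)
    (hdμ : |dμ| ≤ μ₀/4) (hA : 0 ≤ A) (hW : 0 ≤ W) (hBW : B^2 ≤ A*W)
    (hWb : W ≤ (μ₀/4)^2) :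
    |Fb p μ₀ dμ A B W 1 - Fb p μ₀ dμ A B W 0 - Fb1 p μ₀ dμ A B W 0| ≤
      32*(p+1)^2 * 5^p * (μ₀^p * (μ₀^2+A)^(-p)) * ((dμ^2+W)/μ₀^2) := by
  set CC := 32*(p+1)^2 * 5^p * (μ₀^p * (μ₀^2+A)^(-p)) * ((dμ^2+W)/μ₀^2) with hCC
  have hCC0 : 0 ≤ CC := by rw [hCC]; positivity
  have h01 : (0:ℝ) ∈ Set.Icc (0:ℝ) 1 := by norm_num
  have h11 : (1:ℝ) ∈ Set.Icc (0:ℝ) 1 := by norm_num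
  -- first MVT: Fb1 is CC-Lipschitz on Icc 0 1
  have mvt1 : ∀ t ∈ Set.Icc (0:ℝ) 1, ‖Fb1 p μ₀ dμ A B W t - Fb1 p μ₀ dμ A B W 0‖ ≤ CC := by
    intro t ht
    have lip := Convex.norm_image_sub_le_of_norm_hasDerivWithin_le
      (f := Fb1 p μ₀ dμ A B W) (f' := Fb2 p μ₀ dμ A B W) (s := Set.Icc (0:ℝ) 1) (C := CC)
      (fun u hu => by
        obtain ⟨hm, hq⟩ := pos_on_Icc μ₀ dμ A B W u hμ₀ hdμ hA hW hBW hWb hu.1 hu.2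
        exact (hd_F1 p μ₀ dμ A B W u hm.ne' hq.ne').hasDerivWithinAt)
      (fun u hu => by
        rw [Real.norm_eq_abs]
        exact Fb2_le p μ₀ dμ A B W u hp hμ₀ hdμ hA hW hBW hWb hu.1 hu.2)
      (convex_Icc 0 1) h01 ht
    have : ‖Fb1 p μ₀ dμ A B W t - Fb1 p μ₀ dμ A B W 0‖ ≤ CC * ‖t - 0‖ := lip
    have ht' : ‖t - (0:ℝ)‖ ≤ 1 := by
      rw [Real.norm_eq_abs, sub_zero, abs_of_nonneg ht.1]; exact ht.2
    nlinarith [norm_nonneg (t - (0:ℝ))]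
  -- second MVT applied to g t = Fb t - t * Fb1 0
  have mvt2 := Convex.norm_image_sub_le_of_norm_hasDerivWithin_le
    (f := fun t => Fb p μ₀ dμ A B W t - t * Fb1 p μ₀ dμ A B W 0)
    (f' := fun t => Fb1 p μ₀ dμ A B W t - Fb1 p μ₀ dμ A B W 0)
    (s := Set.Icc (0:ℝ) 1) (C := CC)
    (fun u hu => by
      obtain ⟨hm, hq⟩ := pos_on_Icc μ₀ dμ A B W u hμ₀ hdμ hA hW hBW hWb hu.1 hu.2
      exact ((hd_F p μ₀ dμ A B W u hm.ne' hq.ne').sub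
        (hasDerivAt_mul_const (Fb1 p μ₀ dμ A B W 0))).hasDerivWithinAt)
    (fun u hu => mvt1 u hu) (convex_Icc 0 1) h01 h11
  simp only [Real.norm_eq_abs] at mvt2
  have : |Fb p μ₀ dμ A B W 1 - 1 * Fb1 p μ₀ dμ A B W 0
      - (Fb p μ₀ dμ A B W 0 - 0 * Fb1 p μ₀ dμ A B W 0)| ≤ CC * |1 - 0| := mvt2
  rw [show |(1:ℝ) - 0| = 1 by norm_num] at this
  calc |Fb p μ₀ dμ A B W 1 - Fb p μ₀ dμ A B W 0 - Fb1 p μ₀ dμ A B W 0|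
      = |Fb p μ₀ dμ A B W 1 - 1 * Fb1 p μ₀ dμ A B W 0
        - (Fb p μ₀ dμ A B W 0 - 0 * Fb1 p μ₀ dμ A B W 0)| := by ring_nf
    _ ≤ CC * 1 := this
    _ = CC := mul_one CC

lemma ubub_eq (p μ r : ℝ) (hμ : 0 < μ) (hr : 0 ≤ r) :
    μ^(-p) * (1 + r/μ^2)^(-p) = μ^p * (μ^2+r)^(-p) := by
  have hX : 0 < μ^2 + r := by positivity
  have hmp := (rpow_pos_of_pos hμ p).ne'
  have hXp := (rpow_pos_of_pos hX p).ne'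
  have h1 : 1 + r/μ^2 = (μ^2+r)/μ^2 := by field_simp
  have h2 : ((μ^2:ℝ))^p = μ^p * μ^p := by
    rw [show μ^2 = μ*μ by ring, mul_rpow hμ.le hμ.le]
  rw [h1, div_rpow hX.le (by positivity), rpow_neg hμ.le, rpow_neg hX.le,
    rpow_neg (by positivity : (0:ℝ) ≤ μ^2), h2]
  field_simp

lemma Fb_zero (p μ₀ dμ A B W : ℝ) :
    Fb p μ₀ dμ A B W 0 = μ₀^p * (μ₀^2+A)^(-p) := by
  unfold Fb; norm_num

lemma Fb_one (p μ₀ dμ A B W : ℝ) :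
    Fb p μ₀ dμ A B W 1 = (μ₀+dμ)^p * ((μ₀+dμ)^2+(A-2*B+W))^(-p) := by
  unfold Fb; norm_num

lemma Fb1_zero (p μ₀ dμ A B W : ℝ) :
    Fb1 p μ₀ dμ A B W 0 =
      dμ*p*μ₀^(p-1)*(μ₀^2+A)^(-p) + μ₀^p*((2*μ₀*dμ - 2*B)*(-p)*(μ₀^2+A)^(-p-1)) := by
  unfold Fb1
  norm_num
  exact Or.inl (Or.inl (Or.inl (by ring)))

lemma lin_eq (p μ₀ dμ A B : ℝ) (hμ₀ : 0 < μ₀) (hA : 0 ≤ A) :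
    μ₀^(-p) * (p * (A/μ₀^2 - 1) * (1 + A/μ₀^2)^(-(p+1))) * (dμ/μ₀)
      + μ₀^(-p) * (2*p) * (1 + A/μ₀^2)^(-(p+1)) / μ₀^2 * B
    = dμ*p*μ₀^(p-1)*(μ₀^2+A)^(-p) + μ₀^p*((2*μ₀*dμ - 2*B)*(-p)*(μ₀^2+A)^(-p-1)) := by
  have hX : (0:ℝ) < μ₀^2 + A := by positivity
  have hmp := (rpow_pos_of_pos hμ₀ p).ne'
  have h1 : 1 + A/μ₀^2 = (μ₀^2+A)/μ₀^2 := by field_simp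
  have h2 : ((μ₀^2:ℝ))^(p+1) = μ₀^p*μ₀^p*μ₀^2 := by
    rw [rpow_add (by positivity : (0:ℝ) < μ₀^2) p 1, rpow_one,
      show (μ₀^2:ℝ) = μ₀*μ₀ by ring, mul_rpow hμ₀.le hμ₀.le]
  have eexp : (-(p+1) : ℝ) = -p-1 := by ring
  have e1 : ((μ₀^2+A)/μ₀^2 : ℝ)^(-p-1) = (μ₀^2+A)^(-p-1) * (μ₀^p*μ₀^p*μ₀^2) := by
    rw [show (-p-1 : ℝ) = -(p+1) by ring, div_rpow hX.le (by positivity),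
      rpow_neg (by positivity : (0:ℝ) ≤ μ₀^2), div_eq_mul_inv, inv_inv, h2]
  have e3 : (μ₀^2+A : ℝ)^(-p) = (μ₀^2+A) * (μ₀^2+A)^(-p-1) := by
    have h := rpow_add hX 1 (-p-1)
    rw [rpow_one] at h
    rw [show (1 + (-p-1) : ℝ) = -p by ring] at h
    exact h
  have e4 : μ₀^(p-1) = μ₀^p/μ₀ := by rw [rpow_sub hμ₀, rpow_one]
  have e5 : μ₀^(-p) = (μ₀^p)⁻¹ := by rw [rpow_neg hμ₀.le]
  rw [h1, eexp, e1, e3, e4, e5]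
  field_simp
  ring

theorem stmt14 (N : ℕ) (hN : 3 ≤ N) (μ₀ : ℝ) (hμ₀ : 0 < μ₀)
    (ξ₀ : EuclideanSpace ℝ (Fin N)) :
    ∃ C > 0, ∃ δ > 0, ∀ μ : ℝ, 0 < μ → |μ - μ₀| < δ →
      ∀ ξ : EuclideanSpace ℝ (Fin N), ‖ξ - ξ₀‖ < δ →
        ∀ x : EuclideanSpace ℝ (Fin N),
          |Ubub μ ξ x - Ubub μ₀ ξ₀ x -
              μ₀ ^ (-(((N : ℝ) - 2) / 2)) * Zzero (μ₀⁻¹ • (x - ξ₀)) * ((μ - μ₀) / μ₀) -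
              ∑ j : Fin N,
                μ₀ ^ (-(((N : ℝ) - 2) / 2)) * Zcoord j (μ₀⁻¹ • (x - ξ₀)) *
                  ((ξ j - ξ₀ j) / μ₀)|
            ≤ C * Ubub μ₀ ξ₀ x *
                ((μ - μ₀) ^ 2 / μ₀ ^ 2 + ‖ξ - ξ₀‖ ^ 2 / μ₀ ^ 2) := by
  have hN3 : (3:ℝ) ≤ (N:ℝ) := by exact_mod_cast hN
  refine ⟨32*((((N:ℝ)-2)/2)+1)^2 * 5^(((N:ℝ)-2)/2),
    mul_pos (mul_pos (by norm_num) (pow_pos (by linarith) 2))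
      (rpow_pos_of_pos (by norm_num) _), μ₀/4, by positivity, ?_⟩
  intro μ hμ hμd ξ hξd x
  simp only [Ubub, Zzero, Zcoord]
  set p := ((N:ℝ)-2)/2 with hpdef
  have hp : (1:ℝ)/2 ≤ p := by rw [hpdef]; linarith
  have h2p : (N:ℝ) - 2 = 2*p := by rw [hpdef]; ring
  have hNp : -((N:ℝ)/2) = -(p+1) := by rw [hpdef]; ring
  simp only [h2p, hNp]
  set dμ := μ - μ₀ with hdμdef
  set v := x - ξ₀ with hvdef
  set w := ξ - ξ₀ with hwdef
  set A := ‖v‖^2 with hAdef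
  set W := ‖w‖^2 with hWdef
  set B : ℝ := inner ℝ v w with hBdef
  have hy2 : ‖(μ₀⁻¹ • v : EuclideanSpace ℝ (Fin N))‖^2 = A/μ₀^2 := by
    rw [norm_smul, Real.norm_eq_abs, abs_of_pos (inv_pos.mpr hμ₀), mul_pow, hAdef]
    field_simp
  simp only [hy2]
  have hA' : (0:ℝ) ≤ A := by rw [hAdef]; positivity
  have hW' : (0:ℝ) ≤ W := by rw [hWdef]; positivity
  have hdμa : |dμ| ≤ μ₀/4 := hμd.le
  have hWb : W ≤ (μ₀/4)^2 := by
    rw [hWdef]; nlinarith [norm_nonneg w, hξd]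
  have hBW : B^2 ≤ A*W := by
    rw [hBdef, hAdef, hWdef]
    nlinarith [abs_real_inner_le_norm v w, abs_nonneg (inner ℝ v w : ℝ),
      sq_abs (inner ℝ v w : ℝ), norm_nonneg v, norm_nonneg w]
  have hBsum : B = ∑ j, v j * w j := by
    rw [hBdef]
    simp [PiLp.inner_apply, RCLike.inner_apply, conj_trivial, mul_comm]
  have hterm : ∀ j : Fin N, μ₀ ^ (-p) * (2 * p * (μ₀⁻¹ • v) j * (1 + A / μ₀ ^ 2) ^ (-(p + 1)))
        * ((ξ j - ξ₀ j) / μ₀)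
      = (μ₀ ^ (-p) * (2 * p) * (1 + A / μ₀ ^ 2) ^ (-(p + 1)) / μ₀ ^ 2) * (v j * w j) := by
    intro j
    have happ : (μ₀⁻¹ • v : EuclideanSpace ℝ (Fin N)) j = μ₀⁻¹ * (v j) := rfl
    have hwj : ξ j - ξ₀ j = w j := rfl
    rw [happ, hwj]
    field_simp
  have hsum : (∑ j : Fin N, μ₀ ^ (-p) * (2 * p * (μ₀⁻¹ • v) j * (1 + A / μ₀ ^ 2) ^ (-(p + 1)))
        * ((ξ j - ξ₀ j) / μ₀))
      = μ₀ ^ (-p) * (2*p) * (1 + A/μ₀^2)^(-(p+1)) / μ₀^2 * B := by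
    rw [Finset.sum_congr rfl (fun j _ => hterm j), ← Finset.mul_sum, ← hBsum]
  rw [hsum]
  have hU0 : μ₀ ^ (-p) * (1 + A / μ₀ ^ 2) ^ (-p) = Fb p μ₀ dμ A B W 0 := by
    rw [ubub_eq p μ₀ A hμ₀ hA', Fb_zero]
  have hxξ : x - ξ = v - w := by rw [hvdef, hwdef]; abel
  have hr : ‖x - ξ‖^2 = A - 2*B + W := by
    rw [hxξ, norm_sub_sq_real v w, ← hAdef, ← hBdef, ← hWdef]
  have hrpos : (0:ℝ) ≤ A - 2*B + W := by rw [← hr]; positivity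
  have hU1 : μ ^ (-p) * (1 + ‖x - ξ‖ ^ 2 / μ ^ 2) ^ (-p) = Fb p μ₀ dμ A B W 1 := by
    rw [hr, ubub_eq p μ _ hμ hrpos, Fb_one, show μ₀ + dμ = μ by rw [hdμdef]; ring]
  have hT : μ₀ ^ (-p) * (p * (A / μ₀ ^ 2 - 1) * (1 + A / μ₀ ^ 2) ^ (-(p + 1))) * (dμ / μ₀)
      + μ₀ ^ (-p) * (2*p) * (1 + A/μ₀^2)^(-(p+1)) / μ₀^2 * B = Fb1 p μ₀ dμ A B W 0 := by
    rw [Fb1_zero]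
    exact lin_eq p μ₀ dμ A B hμ₀ hA'
  rw [hU1, hU0, sub_sub, hT]
  refine le_trans (core p μ₀ dμ A B W hp hμ₀ hdμa hA' hW' hBW hWb) (le_of_eq ?_)
  rw [Fb_zero]
  ring
end

section
/- For ν → 1 and ζ → 0 in ℝ^N (N ≥ 3), the quantity ν + |y−ζ|²/ν satisfies ν + |y−ζ|²/ν = (1+|y|²)(1 − (ν−1)(|y|²−1)/(1+|y|²) − 2(ζ·y)/(1+|y|²) + O((ν−1)² + |ζ|²/(1+|y|²))), where the O-constant is uniform in y ∈ ℝ^N. -/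
open MeasureTheory Real

set_option maxHeartbeats 800000

theorem stmt15 (N : ℕ) (hN : 3 ≤ N) :
    ∃ C > 0, ∃ δ > 0, ∀ ν : ℝ, 0 < ν → |ν - 1| < δ →
      ∀ ζ : EuclideanSpace ℝ (Fin N), ‖ζ‖ < δ →
        ∀ y : EuclideanSpace ℝ (Fin N),
          |ν + ‖y - ζ‖ ^ 2 / ν -
              (1 + ‖y‖ ^ 2) *
                (1 - (ν - 1) * (‖y‖ ^ 2 - 1) / (1 + ‖y‖ ^ 2) -
                  2 * (inner ℝ ζ y : ℝ) / (1 + ‖y‖ ^ 2))|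
            ≤ (1 + ‖y‖ ^ 2) * C * ((ν - 1) ^ 2 + ‖ζ‖ ^ 2 / (1 + ‖y‖ ^ 2)) := by
  refine ⟨4, by norm_num, 1/2, by norm_num, ?_⟩
  intro ν hν hνδ ζ hζ y
  have hν2 : (1:ℝ)/2 < ν := by
    have := abs_lt.mp hνδ; linarith [this.1]
  set a := ‖y‖ ^ 2 with ha_def
  set b := (inner ℝ ζ y : ℝ) with hb_def
  set c := ‖ζ‖ ^ 2 with hc_def
  have ha : 0 ≤ a := sq_nonneg _
  have hc : 0 ≤ c := sq_nonneg _
  have ha1 : (0:ℝ) < 1 + a := by linarith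
  have hsq : ‖y - ζ‖ ^ 2 = a - 2 * b + c := by
    rw [ha_def, hb_def, hc_def, norm_sub_sq_real, real_inner_comm]
  have hCS : b ^ 2 ≤ c * a := by
    have h := abs_real_inner_le_norm ζ y
    have h2 : |b| ^ 2 ≤ (‖ζ‖ * ‖y‖) ^ 2 := by
      exact pow_le_pow_left₀ (abs_nonneg _) h 2
    calc b ^ 2 = |b| ^ 2 := (sq_abs b).symm
    _ ≤ (‖ζ‖ * ‖y‖) ^ 2 := h2
    _ = c * a := by rw [hc_def, ha_def]; ring
  have hkey : ν + ‖y - ζ‖ ^ 2 / ν -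
      (1 + a) * (1 - (ν - 1) * (a - 1) / (1 + a) - 2 * b / (1 + a))
      = ((ν - 1) ^ 2 * a + 2 * (ν - 1) * b + c) / ν := by
    rw [hsq]
    field_simp
    ring
  rw [hkey]
  have hid1 : ‖(ν - 1) • y + ζ‖ ^ 2 = (ν - 1) ^ 2 * a + 2 * (ν - 1) * b + c := by
    rw [norm_add_sq_real, norm_smul, real_inner_smul_left, real_inner_comm]
    rw [ha_def, hb_def, hc_def]
    rw [Real.norm_eq_abs, mul_pow, sq_abs]
    ring
  have hid2 : ‖(ν - 1) • y - ζ‖ ^ 2 = (ν - 1) ^ 2 * a - 2 * (ν - 1) * b + c := by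
    rw [norm_sub_sq_real, norm_smul, real_inner_smul_left, real_inner_comm]
    rw [ha_def, hb_def, hc_def]
    rw [Real.norm_eq_abs, mul_pow, sq_abs]
    ring
  have hX0 : 0 ≤ (ν - 1) ^ 2 * a + 2 * (ν - 1) * b + c := by
    rw [← hid1]; positivity
  have hXup : (ν - 1) ^ 2 * a + 2 * (ν - 1) * b + c
      ≤ 2 * ((ν - 1) ^ 2 * a + c) := by
    have h := sq_nonneg ‖(ν - 1) • y - ζ‖
    rw [hid2] at h
    linarith
  rw [abs_of_nonneg (div_nonneg hX0 hν.le)]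
  have hrhs : (1 + a) * 4 * ((ν - 1) ^ 2 + c / (1 + a))
      = 4 * ((ν - 1) ^ 2 * (1 + a) + c) := by
    field_simp
  rw [hrhs]
  have h1 : ((ν - 1) ^ 2 * a + 2 * (ν - 1) * b + c) / ν
      ≤ 2 * ((ν - 1) ^ 2 * a + 2 * (ν - 1) * b + c) := by
    rw [div_le_iff₀ hν]
    nlinarith [hX0]
  have h2 : 2 * ((ν - 1) ^ 2 * a + 2 * (ν - 1) * b + c)
      ≤ 4 * ((ν - 1) ^ 2 * (1 + a) + c) := by
    nlinarith [hXup, sq_nonneg (ν - 1)]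
  linarith
end
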